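/- Let a < b be real numbers, let w ∈ ℝ³ with ‖w‖ = 1, and let u : (a,b) → ℝ³ be differentiable with ‖u(s)‖ = 1 and u(s) × u'(s) = w for every s ∈ (a,b). Then for all s₁, s₂ ∈ (a,b) one has u(s₁) × u(s₂) = sin(s₂ − s₁) · w. -/

import Mathlib

open MeasureTheory Filter
open scoped RealInnerProductSpace

/-- The cross product on Euclidean `ℝ³`. -/
noncomputable def cross3 (a b : EuclideanSpace ℝ (Fin 3)) : EuclideanSpace ℝ (Fin 3) :=
  (WithLp.equiv 2 (Fin 3 → ℝ)).symm
    (crossProduct ((WithLp.equiv 2 (Fin 3 → ℝ)) a) ((WithLp.equiv 2 (Fin 3 → ℝ)) b))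

lemma cross3_apply0 (a b : EuclideanSpace ℝ (Fin 3)) :
    cross3 a b 0 = a 1 * b 2 - a 2 * b 1 := by simp [cross3, crossProduct]

lemma cross3_apply1 (a b : EuclideanSpace ℝ (Fin 3)) :
    cross3 a b 1 = a 2 * b 0 - a 0 * b 2 := by simp [cross3, crossProduct]

lemma cross3_apply2 (a b : EuclideanSpace ℝ (Fin 3)) :
    cross3 a b 2 = a 0 * b 1 - a 1 * b 0 := by simp [cross3, crossProduct]

lemma inner3 (a b : EuclideanSpace ℝ (Fin 3)) :
    ⟪a, b⟫ = a 0 * b 0 + a 1 * b 1 + a 2 * b 2 := by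
  simp [PiLp.inner_apply, Fin.sum_univ_three]; ring

/-- `⟪a, a × b⟫ = 0`. -/
lemma inner_cross3_left (a b : EuclideanSpace ℝ (Fin 3)) : ⟪a, cross3 a b⟫ = 0 := by
  rw [inner3, cross3_apply0, cross3_apply1, cross3_apply2]; ring

/-- `⟪b, a × b⟫ = 0`. -/
lemma inner_cross3_right (a b : EuclideanSpace ℝ (Fin 3)) : ⟪b, cross3 a b⟫ = 0 := by
  rw [inner3, cross3_apply0, cross3_apply1, cross3_apply2]; ring

/-- If `p × q = w`, `⟪p,p⟫ = 1`, `⟪p,q⟫ = 0`, then `w × p = q`. -/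
lemma cross3_triple (p q w : EuclideanSpace ℝ (Fin 3)) (h : cross3 p q = w)
    (hp : ⟪p, p⟫ = 1) (hpq : ⟪p, q⟫ = 0) : cross3 w p = q := by
  subst h
  rw [inner3] at hp hpq
  ext i
  fin_cases i
  · show cross3 (cross3 p q) p 0 = q 0
    rw [cross3_apply0, cross3_apply1, cross3_apply2]
    linear_combination q 0 * hp - p 0 * hpq
  · show cross3 (cross3 p q) p 1 = q 1
    rw [cross3_apply1, cross3_apply2, cross3_apply0]
    linear_combination q 1 * hp - p 1 * hpq
  · show cross3 (cross3 p q) p 2 = q 2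
    rw [cross3_apply2, cross3_apply0, cross3_apply1]
    linear_combination q 2 * hp - p 2 * hpq

set_option maxHeartbeats 1000000 in
/-- if a differentiable unit field `u` on `(a,b)` has constant unit
chirality `u × u' ≡ w`, then `u(s₁) × u(s₂) = sin(s₂ − s₁) · w` for all `s₁, s₂ ∈ (a,b)`. -/
theorem stmt13 (a b : ℝ) (hab : a < b) (w : EuclideanSpace ℝ (Fin 3)) (hw : ‖w‖ = 1)
    (u : ℝ → EuclideanSpace ℝ (Fin 3))
    (hu : ∀ s ∈ Set.Ioo a b, ‖u s‖ = 1)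
    (hdiff : ∀ s ∈ Set.Ioo a b, DifferentiableAt ℝ u s)
    (hchir : ∀ s ∈ Set.Ioo a b, cross3 (u s) (deriv u s) = w) :
    ∀ s₁ ∈ Set.Ioo a b, ∀ s₂ ∈ Set.Ioo a b,
      cross3 (u s₁) (u s₂) = Real.sin (s₂ - s₁) • w := by
  intro s₁ hs₁ s₂ hs₂
  have hww : ⟪w, w⟫ = (1 : ℝ) := by
    rw [real_inner_self_eq_norm_sq, hw]; norm_num
  -- ⟪u s, u s⟫ = 1 on the interval
  have huu : ∀ s ∈ Set.Ioo a b, ⟪u s, u s⟫ = (1 : ℝ) := by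
    intro s hs
    rw [real_inner_self_eq_norm_sq, hu s hs]; norm_num
  -- ⟪u s, u' s⟫ = 0
  have hperp : ∀ s ∈ Set.Ioo a b, ⟪u s, deriv u s⟫ = (0 : ℝ) := by
    intro s hs
    have hd : HasDerivAt (fun t => ⟪u t, u t⟫)
        (⟪u s, deriv u s⟫ + ⟪deriv u s, u s⟫) s :=
      HasDerivAt.inner ℝ (hdiff s hs).hasDerivAt (hdiff s hs).hasDerivAt
    have hev : (fun t => ⟪u t, u t⟫) =ᶠ[nhds s] fun _ => (1 : ℝ) := by
      filter_upwards [isOpen_Ioo.mem_nhds hs] with t ht using huu t ht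
    have hd' : HasDerivAt (fun t => ⟪u t, u t⟫) 0 s :=
      (hasDerivAt_const s (1 : ℝ)).congr_of_eventuallyEq hev
    have h2 := hd.unique hd'
    rw [real_inner_comm (u s) (deriv u s)] at h2
    linarith
  -- ⟪u s, w⟫ = 0
  have huw : ∀ s ∈ Set.Ioo a b, ⟪u s, w⟫ = (0 : ℝ) := by
    intro s hs
    rw [← hchir s hs]
    exact inner_cross3_left _ _
  -- the ODE: u' = w × u
  have hode : ∀ s ∈ Set.Ioo a b, deriv u s = cross3 w (u s) := by
    intro s hs
    exact (cross3_triple (u s) (deriv u s) w (hchir s hs) (huu s hs) (hperp s hs)).symm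
  set u₁ := u s₁ with hu₁
  set v := cross3 w u₁ with hv
  set c : ℝ → EuclideanSpace ℝ (Fin 3) :=
    fun s => Real.cos (s - s₁) • u₁ + Real.sin (s - s₁) • v with hc
  have hu₁u₁ : ⟪u₁, u₁⟫ = (1 : ℝ) := huu s₁ hs₁
  have hu₁w : ⟪u₁, w⟫ = (0 : ℝ) := huw s₁ hs₁
  -- expanded coordinate versions
  have hww' : w 0 * w 0 + w 1 * w 1 + w 2 * w 2 = 1 := by rw [← inner3]; exact hww
  have hu₁u₁' : u₁ 0 * u₁ 0 + u₁ 1 * u₁ 1 + u₁ 2 * u₁ 2 = 1 := by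
    rw [← inner3]; exact hu₁u₁
  have hu₁w' : u₁ 0 * w 0 + u₁ 1 * w 1 + u₁ 2 * w 2 = 0 := by
    rw [← inner3]; exact hu₁w
  -- derivative of c
  have hcd : ∀ s : ℝ, HasDerivAt c
      (-Real.sin (s - s₁) • u₁ + Real.cos (s - s₁) • v) s := by
    intro s
    have h1 : HasDerivAt (fun t : ℝ => Real.cos (t - s₁)) (-Real.sin (s - s₁)) s := by
      simpa [Function.comp_def] using (Real.hasDerivAt_cos (s - s₁)).comp s ((hasDerivAt_id s).sub_const s₁)
    have h2 : HasDerivAt (fun t : ℝ => Real.sin (t - s₁)) (Real.cos (s - s₁)) s := by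
      simpa [Function.comp_def] using (Real.hasDerivAt_sin (s - s₁)).comp s ((hasDerivAt_id s).sub_const s₁)
    exact (h1.smul_const u₁).add (h2.smul_const v)
  -- φ := ⟪u, c⟫ has zero derivative on the interval
  set φ : ℝ → ℝ := fun s => ⟪u s, c s⟫ with hφ
  have hφd : ∀ s ∈ Set.Ioo a b, HasDerivAt φ 0 s := by
    intro s hs
    have hd : HasDerivAt φ
        (⟪u s, -Real.sin (s - s₁) • u₁ + Real.cos (s - s₁) • v⟫
          + ⟪deriv u s, c s⟫) s :=
      HasDerivAt.inner ℝ (hdiff s hs).hasDerivAt (hcd s)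
    have key : ⟪u s, -Real.sin (s - s₁) • u₁ + Real.cos (s - s₁) • v⟫
        + ⟪deriv u s, c s⟫ = 0 := by
      rw [hode s hs]
      set x := u s with hx
      simp only [hc, hv]
      rw [inner3, inner3]
      simp only [PiLp.add_apply, PiLp.smul_apply, smul_eq_mul,
        cross3_apply0, cross3_apply1, cross3_apply2]
      linear_combination
        (Real.sin (s - s₁) * (x 0 * u₁ 0 + x 1 * u₁ 1 + x 2 * u₁ 2)) * hww'
        - (Real.sin (s - s₁) * (w 0 * x 0 + w 1 * x 1 + w 2 * x 2)) * hu₁w'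
    rw [← key]; exact hd
  -- φ is constant on Ioo a b, hence φ s₂ = φ s₁ = 1
  have hφconst : φ s₂ = φ s₁ := by
    have hdiffOn : DifferentiableOn ℝ φ (Set.Ioo a b) := fun s hs =>
      ((hφd s hs).differentiableAt).differentiableWithinAt
    have hfd : ∀ s ∈ Set.Ioo a b, fderivWithin ℝ φ (Set.Ioo a b) s = 0 := by
      intro s hs
      rw [fderivWithin_eq_fderiv (isOpen_Ioo.uniqueDiffWithinAt hs)
        (hφd s hs).differentiableAt, (hφd s hs).hasFDerivAt.fderiv]
      ext
      simp
    exact (convex_Ioo a b).is_const_of_fderivWithin_eq_zero hdiffOn hfd hs₂ hs₁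
  have hu₁v : ⟪u₁, v⟫ = (0 : ℝ) := by
    rw [hv]; exact inner_cross3_right _ _
  have hvu₁ : ⟪v, u₁⟫ = (0 : ℝ) := by rw [real_inner_comm]; exact hu₁v
  have hφ₁ : φ s₁ = 1 := by
    simp only [hφ, hc]
    simp [inner_add_right, real_inner_smul_right, hu₁u₁, hu₁v]
    exact hu₁u₁
  -- ⟪v, v⟫ = 1 (Lagrange identity)
  have hvv : ⟪v, v⟫ = (1 : ℝ) := by
    rw [hv, inner3]
    simp only [cross3_apply0, cross3_apply1, cross3_apply2]
    linear_combination (u₁ 0 * u₁ 0 + u₁ 1 * u₁ 1 + u₁ 2 * u₁ 2) * hww' + hu₁u₁'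
      - (u₁ 0 * w 0 + u₁ 1 * w 1 + u₁ 2 * w 2) * hu₁w'
  -- ⟪c s₂, c s₂⟫ = 1
  have hcc : ⟪c s₂, c s₂⟫ = (1 : ℝ) := by
    simp only [hc]
    rw [inner_add_left, inner_add_right, inner_add_right,
      real_inner_smul_left, real_inner_smul_left, real_inner_smul_left,
      real_inner_smul_left, real_inner_smul_right, real_inner_smul_right,
      real_inner_smul_right, real_inner_smul_right, hu₁u₁, hu₁v, hvu₁, hvv]
    linear_combination Real.sin_sq_add_cos_sq (s₂ - s₁)
  -- conclude u s₂ = c s₂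
  have husc : u s₂ = c s₂ := by
    have hn : ‖u s₂ - c s₂‖ ^ 2 = 0 := by
      rw [← real_inner_self_eq_norm_sq, inner_sub_sub_self, huu s₂ hs₂, hcc]
      have h1 : ⟪u s₂, c s₂⟫ = (1 : ℝ) := by
        have := hφconst.trans hφ₁
        simpa [hφ] using this
      have h2 : ⟪c s₂, u s₂⟫ = (1 : ℝ) := by rw [real_inner_comm]; exact h1
      rw [h1, h2]; ring
    have hn2 : ‖u s₂ - c s₂‖ = 0 := by
      have := pow_eq_zero_iff (n := 2) (by norm_num) |>.mp hn
      exact this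
    have := norm_eq_zero.mp hn2
    exact sub_eq_zero.mp this
  -- final computation
  rw [husc]
  simp only [hc, hv]
  ext i
  fin_cases i
  · show cross3 u₁ (Real.cos (s₂ - s₁) • u₁ + Real.sin (s₂ - s₁) • cross3 w u₁) 0
      = (Real.sin (s₂ - s₁) • w) 0
    simp only [cross3_apply0, cross3_apply1, cross3_apply2, PiLp.add_apply,
      PiLp.smul_apply, smul_eq_mul]
    linear_combination Real.sin (s₂ - s₁) * w 0 * hu₁u₁'
      - Real.sin (s₂ - s₁) * u₁ 0 * hu₁w'
  · show cross3 u₁ (Real.cos (s₂ - s₁) • u₁ + Real.sin (s₂ - s₁) • cross3 w u₁) 1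
      = (Real.sin (s₂ - s₁) • w) 1
    simp only [cross3_apply0, cross3_apply1, cross3_apply2, PiLp.add_apply,
      PiLp.smul_apply, smul_eq_mul]
    linear_combination Real.sin (s₂ - s₁) * w 1 * hu₁u₁'
      - Real.sin (s₂ - s₁) * u₁ 1 * hu₁w'
  · show cross3 u₁ (Real.cos (s₂ - s₁) • u₁ + Real.sin (s₂ - s₁) • cross3 w u₁) 2
      = (Real.sin (s₂ - s₁) • w) 2
    simp only [cross3_apply0, cross3_apply1, cross3_apply2, PiLp.add_apply,
      PiLp.smul_apply, smul_eq_mul]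
    linear_combination Real.sin (s₂ - s₁) * w 2 * hu₁u₁'
      - Real.sin (s₂ - s₁) * u₁ 2 * hu₁w'
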